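/- For n ≥ 1 let ρ⁰_n be the (n+1)-qubit state ρ⁰_n = |0⟩⟨0| ⊗ₖ (2^{−n} I_{2^n}), viewed as a matrix indexed by bit strings Fin (n+1) → Fin 2 (it is diagonal, with entry 2^{−n} on strings whose first bit is 0 and entry 0 otherwise). Then for every nonempty proper subset S of the qubit index set Fin (n+1), under the natural identification of the index set with (S → Fin 2) × (Sᶜ → Fin 2): (a) ρ⁰_n is separable across the bipartition S versus Sᶜ; and (b) for every ε > 0 there exists a unitary matrix U with ‖U − I‖ < ε (ℓ²-operator norm) such that the partial transpose (on the S factor) of U ρ⁰_n U† is not positive semidefinite. That is, ρ⁰_n is boundary separable in its unitary orbit for all 2^{n+1} − 2 nontrivial bipartitions. -/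

import Mathlib

open Matrix Kronecker
open scoped ComplexOrder

/-- Partial transpose on the first factor of a bipartite matrix. -/
def PT {A B : Type*} (M : Matrix (A × B) (A × B) ℂ) : Matrix (A × B) (A × B) ℂ :=
  Matrix.of fun p q => M (q.1, p.2) (p.1, q.2)

/-- A bipartite matrix is separable if it is a finite sum of Kronecker products of
positive semidefinite matrices. -/
def Separable {A B : Type*} [Fintype A] [Fintype B]
    (ρ : Matrix (A × B) (A × B) ℂ) : Prop :=
  ∃ (k : ℕ) (M : Fin k → Matrix A A ℂ) (N : Fin k → Matrix B B ℂ),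
    (∀ l, (M l).PosSemidef) ∧ (∀ l, (N l).PosSemidef) ∧ ρ = ∑ l, M l ⊗ₖ N l

/-- The ℓ²-operator norm of a square complex matrix. -/
noncomputable def opNorm {d : Type*} [Fintype d] [DecidableEq d]
    (M : Matrix d d ℂ) : ℝ :=
  ‖Matrix.toEuclideanCLM (𝕜 := ℂ) M‖

/-- The `(n+1)`-qubit state `ρ⁰ₙ = |0⟩⟨0| ⊗ₖ 2⁻ⁿ I`, indexed by bit strings. -/
noncomputable def rho0 (n : ℕ) :
    Matrix (Fin (n + 1) → Fin 2) (Fin (n + 1) → Fin 2) ℂ :=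
  Matrix.of fun x y => if x = y ∧ x 0 = 0 then (1 / 2 ^ n : ℂ) else 0

/-- The natural identification of bit strings with pairs of bit strings on a subset `S`
of positions and its complement. -/
def splitEquiv {n : ℕ} (S : Finset (Fin n)) :
    (Fin n → Fin 2) ≃ ((S → Fin 2) × ((Sᶜ : Finset (Fin n)) → Fin 2)) :=
  ((Equiv.sumCompl (· ∈ S)).symm.arrowCongr (Equiv.refl (Fin 2))).trans
    ((Equiv.sumArrowEquivProdArrow _ _ (Fin 2)).trans
      (Equiv.prodCongr (Equiv.refl _)
        (((Equiv.subtypeEquivRight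
            (fun x => (Finset.mem_compl (s := S) (a := x)))).arrowCongr
          (Equiv.refl (Fin 2))).symm)))

/-! ### Auxiliary lemmas -/

section Aux

variable {d : Type*} [Fintype d] [DecidableEq d]

lemma sum_pair_support {x y : d} (hxy : x ≠ y) (f : d → ℂ)
    (h : ∀ s, s ≠ x → s ≠ y → f s = 0) : ∑ s, f s = f x + f y := by
  rw [← Finset.sum_pair hxy]
  refine (Finset.sum_subset (Finset.subset_univ _) fun s _ hs => ?_).symm
  simp only [Finset.mem_insert, Finset.mem_singleton, not_or] at hs
  exact h s hs.1 hs.2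

/-- If a PSD matrix has a vanishing diagonal entry, the whole row vanishes. -/
lemma psd_entry_zero {M : Matrix d d ℂ} (hM : M.PosSemidef) {p : d}
    (hpp : M p p = 0) (q : d) : M p q = 0 := by
  obtain ⟨B, rfl⟩ : ∃ B : Matrix d d ℂ, M = Bᴴ * B := by
    open scoped MatrixOrder in
    simpa [Matrix.star_eq_conjTranspose] using
      CStarAlgebra.nonneg_iff_eq_star_mul_self.mp hM.nonneg
  have key : ∀ s, B s p = 0 := by
    have h0 : ((∑ s, Complex.normSq (B s p) : ℝ) : ℂ) = 0 := by
      rw [← hpp]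
      simp only [Matrix.mul_apply, Matrix.conjTranspose_apply]
      push_cast
      exact Finset.sum_congr rfl fun s _ => Complex.normSq_eq_conj_mul_self
    have h1 : (∑ s, Complex.normSq (B s p) : ℝ) = 0 := by exact_mod_cast h0
    intro s
    have := (Finset.sum_eq_zero_iff_of_nonneg
      (fun i _ => Complex.normSq_nonneg (B i p))).mp h1 s (Finset.mem_univ s)
    exact Complex.normSq_eq_zero.mp this
  simp [Matrix.mul_apply, Matrix.conjTranspose_apply, key]

/-- Any diagonal matrix with nonnegative entries is separable. -/
lemma separable_diagonal {A B : Type*} [Fintype A] [Fintype B] [DecidableEq A] [DecidableEq B]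
    (f : A × B → ℂ) (hf : ∀ p, 0 ≤ f p) : Separable (Matrix.diagonal f) := by
  classical
  set e := (Fintype.equivFin (A × B)).symm with he
  refine ⟨Fintype.card (A × B),
    fun l => Matrix.diagonal (fun a => if a = (e l).1 then 1 else 0),
    fun l => Matrix.diagonal (fun b => if b = (e l).2 then f (e l) else 0),
    fun l => Matrix.PosSemidef.diagonal fun a => by dsimp; split_ifs <;> simp,
    fun l => Matrix.PosSemidef.diagonal fun b => by
      dsimp
      split_ifs
      · exact hf _
      · simp, ?_⟩
  ext p q
  rw [Matrix.sum_apply]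
  rcases eq_or_ne p q with rfl | hpq
  · rw [Matrix.diagonal_apply_eq]
    have hterm : ∀ l, (Matrix.diagonal (fun a => if a = (e l).1 then (1:ℂ) else 0) ⊗ₖ
        Matrix.diagonal (fun b => if b = (e l).2 then f (e l) else 0)) p p
        = if e l = p then f (e l) else 0 := by
      intro l
      rw [Matrix.diagonal_kronecker_diagonal, Matrix.diagonal_apply_eq]
      by_cases h : e l = p
      · simp [← h]
      · rw [if_neg h]
        by_cases h1 : p.1 = (e l).1
        · have h2 : p.2 ≠ (e l).2 := fun h2 => h (Prod.ext_iff.mpr ⟨h1.symm, h2.symm⟩)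
          simp [h2]
        · simp [h1]
    rw [Finset.sum_congr rfl fun l _ => hterm l,
      Equiv.sum_comp e (fun r => if r = p then f r else 0),
      Finset.sum_ite_eq' Finset.univ p f]
    simp
  · rw [Matrix.diagonal_apply_ne _ hpq]
    refine (Finset.sum_eq_zero fun l _ => ?_).symm
    rw [Matrix.diagonal_kronecker_diagonal, Matrix.diagonal_apply_ne _ hpq]

end Aux

section Rot

variable {d : Type*} [Fintype d] [DecidableEq d]

/-- Givens rotation by angle `θ` in the plane spanned by basis vectors `x` and `y`. -/
noncomputable def rot (x y : d) (θ : ℝ) : Matrix d d ℂ :=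
  Matrix.of fun p q =>
    if p = x ∧ q = x then (Real.cos θ : ℂ)
    else if p = x ∧ q = y then (-Real.sin θ : ℂ)
    else if p = y ∧ q = x then (Real.sin θ : ℂ)
    else if p = y ∧ q = y then (Real.cos θ : ℂ)
    else if p = q then 1 else 0

lemma rot_apply_of_notin {x y : d} (θ : ℝ) {p : d} (hpx : p ≠ x) (hpy : p ≠ y) (q : d) :
    rot x y θ p q = if p = q then 1 else 0 := by
  simp [rot, hpx, hpy]

lemma rot_apply_eq_zero {x y : d} (θ : ℝ) {p q : d} (hqx : q ≠ x) (hqy : q ≠ y)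
    (hpq : p ≠ q) : rot x y θ p q = 0 := by
  simp [rot, hqx, hqy, hpq]

lemma rot_xx (x y : d) (θ : ℝ) : rot x y θ x x = (Real.cos θ : ℂ) := by simp [rot]

lemma rot_xy {x y : d} (hxy : x ≠ y) (θ : ℝ) : rot x y θ x y = (-Real.sin θ : ℂ) := by
  simp [rot, hxy, hxy.symm]

lemma rot_yx {x y : d} (hxy : x ≠ y) (θ : ℝ) : rot x y θ y x = (Real.sin θ : ℂ) := by
  simp [rot, hxy, hxy.symm]

lemma rot_yy {x y : d} (hxy : x ≠ y) (θ : ℝ) : rot x y θ y y = (Real.cos θ : ℂ) := by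
  simp [rot, hxy, hxy.symm]

lemma rot_unitary {x y : d} (hxy : x ≠ y) (θ : ℝ) :
    star (rot x y θ) * rot x y θ = 1 := by
  have hyx : y ≠ x := hxy.symm
  have trig := Real.sin_sq_add_cos_sq θ
  ext p q
  rw [Matrix.mul_apply]
  simp only [Matrix.star_eq_conjTranspose, Matrix.conjTranspose_apply]
  by_cases hpx : p = x
  · rw [sum_pair_support hxy _ (fun s hsx hsy => by
      rw [rot_apply_of_notin θ hsx hsy, if_neg (fun h : s = p => hsx (h.trans hpx))]
      simp), hpx]
    by_cases hqx : q = x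
    · rw [hqx, rot_xx, rot_yx hxy, Matrix.one_apply_eq]
      simp only [Complex.star_def, map_neg, Complex.conj_ofReal]
      norm_cast
      nlinarith [trig]
    · by_cases hqy : q = y
      · rw [hqy, rot_xx, rot_xy hxy, rot_yx hxy, rot_yy hxy, Matrix.one_apply_ne hxy]
        simp only [Complex.star_def, map_neg, Complex.conj_ofReal]
        ring
      · rw [rot_apply_eq_zero θ hqx hqy (fun h => hqx h.symm),
          rot_apply_eq_zero θ hqx hqy (fun h => hqy h.symm),
          Matrix.one_apply_ne (fun h => hqx h.symm)]
        ring
  · by_cases hpy : p = y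
    · rw [sum_pair_support hxy _ (fun s hsx hsy => by
        rw [rot_apply_of_notin θ hsx hsy, if_neg (fun h : s = p => hsy (h.trans hpy))]
        simp), hpy]
      by_cases hqx : q = x
      · rw [hqx, rot_xx, rot_xy hxy, rot_yx hxy, rot_yy hxy, Matrix.one_apply_ne hyx]
        simp only [Complex.star_def, map_neg, Complex.conj_ofReal]
        ring
      · by_cases hqy : q = y
        · rw [hqy, rot_xy hxy, rot_yy hxy, Matrix.one_apply_eq]
          simp only [Complex.star_def, map_neg, Complex.conj_ofReal]
          norm_cast
          nlinarith [trig]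
        · rw [rot_apply_eq_zero θ hqx hqy (fun h => hqx h.symm),
            rot_apply_eq_zero θ hqx hqy (fun h => hqy h.symm),
            Matrix.one_apply_ne (fun h => hqy h.symm)]
          ring
    · rw [Finset.sum_eq_single p (fun s _ hsp => by
        rw [rot_apply_eq_zero θ hpx hpy hsp]
        simp) (by simp)]
      rw [rot_apply_of_notin θ hpx hpy p, rot_apply_of_notin θ hpx hpy q]
      simp [Matrix.one_apply]

end Rot

section NormBound

variable {d : Type*} [Fintype d] [DecidableEq d]

/-- The orthogonal projection onto the span of basis vectors `x` and `y`. -/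
def proj (x y : d) : Matrix d d ℂ :=
  Matrix.of fun p q => if p = q ∧ (p = x ∨ p = y) then 1 else 0

lemma proj_conjTranspose (x y : d) : (proj x y)ᴴ = proj x y := by
  ext p q
  simp only [Matrix.conjTranspose_apply, proj, Matrix.of_apply]
  by_cases hpq : p = q
  · subst hpq
    split_ifs <;> simp_all
  · rw [if_neg (fun h => hpq h.1.symm), if_neg (fun h => hpq h.1)]
    simp

lemma proj_mul_proj (x y : d) : proj x y * proj x y = proj x y := by
  ext p q
  rw [Matrix.mul_apply, Finset.sum_eq_single p (fun s _ hsp => by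
    simp only [proj, Matrix.of_apply]
    rw [if_neg (fun h => hsp h.1.symm), zero_mul]) (by simp)]
  simp only [proj, Matrix.of_apply]
  by_cases hc : p = x ∨ p = y
  · simp [hc]
  · simp [hc]

lemma rot_sub_one_mul (x y : d) (hxy : x ≠ y) (θ : ℝ) :
    (rot x y θ - 1)ᴴ * (rot x y θ - 1)
      = ((2 - 2 * Real.cos θ : ℝ) : ℂ) • proj x y := by
  have hyx : y ≠ x := hxy.symm
  have hu : (rot x y θ)ᴴ * rot x y θ = 1 := by
    rw [← Matrix.star_eq_conjTranspose]; exact rot_unitary hxy θ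
  rw [Matrix.conjTranspose_sub, Matrix.conjTranspose_one, Matrix.sub_mul, Matrix.mul_sub,
    Matrix.mul_sub, Matrix.mul_one, Matrix.one_mul, hu]
  ext p q
  simp only [Matrix.sub_apply, Matrix.smul_apply, Matrix.conjTranspose_apply, proj,
    Matrix.of_apply, smul_eq_mul]
  have conjsimp : ∀ r : ℝ, (starRingEnd ℂ) (Complex.cos r) = Complex.cos r := by
    intro r
    rw [← Complex.cos_conj, Complex.conj_ofReal]
  have conjsimp' : ∀ r : ℝ, (starRingEnd ℂ) (Complex.sin r) = Complex.sin r := by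
    intro r
    rw [← Complex.sin_conj, Complex.conj_ofReal]
  by_cases hpx : p = x
  · rw [hpx]
    by_cases hqx : q = x
    · rw [hqx, rot_xx, if_pos ⟨rfl, Or.inl rfl⟩]
      simp [Matrix.one_apply, Complex.star_def, map_neg, conjsimp, conjsimp']
      all_goals push_cast
      all_goals ring
    · by_cases hqy : q = y
      · rw [hqy, rot_xy hxy, rot_yx hxy, if_neg (fun h => hxy h.1)]
        simp [Matrix.one_apply, hxy, Complex.star_def, map_neg, conjsimp, conjsimp']
        all_goals push_cast
        all_goals ring
      · rw [rot_apply_eq_zero θ hqx hqy (fun h => hqx h.symm),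
          rot_apply_of_notin θ hqx hqy x, if_neg hqx,
          if_neg (fun h : x = q ∧ _ => hqx h.1.symm)]
        simp [Matrix.one_apply, show x ≠ q from fun h => hqx h.symm]
  · by_cases hpy : p = y
    · rw [hpy]
      by_cases hqx : q = x
      · rw [hqx, rot_xy hxy, rot_yx hxy, if_neg (fun h => hyx h.1)]
        simp [Matrix.one_apply, hyx, Complex.star_def, map_neg, conjsimp, conjsimp']
        all_goals push_cast
        all_goals ring
      · by_cases hqy : q = y
        · rw [hqy, rot_yy hxy, if_pos ⟨rfl, Or.inr rfl⟩]
          simp [Matrix.one_apply, Complex.star_def, map_neg, conjsimp, conjsimp']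
          all_goals push_cast
          all_goals ring
        · rw [rot_apply_eq_zero θ hqx hqy (fun h => hqy h.symm),
            rot_apply_of_notin θ hqx hqy y, if_neg hqy,
            if_neg (fun h : y = q ∧ _ => hqy h.1.symm)]
          simp [Matrix.one_apply, show y ≠ q from fun h => hqy h.symm]
    · by_cases hpq : p = q
      · rw [← hpq, rot_apply_of_notin θ hpx hpy p, if_pos rfl,
          if_neg (fun h : p = p ∧ _ => h.2.elim hpx hpy)]
        simp
      · rw [rot_apply_eq_zero θ hpx hpy (fun h => hpq h.symm),
          rot_apply_of_notin θ hpx hpy q, if_neg hpq,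
          if_neg (fun h : p = q ∧ _ => hpq h.1)]
        simp [Matrix.one_apply, hpq]

set_option synthInstance.maxHeartbeats 1000000 in
set_option maxHeartbeats 2000000 in
/-- Operator-norm bound for the rotation: `‖R(θ) − 1‖² ≤ 2 − 2 cos θ`. -/
lemma rot_opNorm_sq_le (x y : d) (hxy : x ≠ y) (θ : ℝ) :
    opNorm (rot x y θ - 1) ^ 2 ≤ 2 - 2 * Real.cos θ := by
  have hc0 : (0:ℝ) ≤ 2 - 2 * Real.cos θ := by nlinarith [Real.cos_le_one θ]
  set φ := Matrix.toEuclideanCLM (𝕜 := ℂ) (n := d) with hφ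
  have hQ : ‖φ (proj x y)‖ ≤ 1 := by
    have h1 : ‖φ (proj x y)‖ * ‖φ (proj x y)‖ = ‖φ (proj x y)‖ := by
      rw [← CStarRing.norm_star_mul_self, ← map_star, ← _root_.map_mul,
        Matrix.star_eq_conjTranspose, proj_conjTranspose, proj_mul_proj]
    nlinarith [norm_nonneg (φ (proj x y))]
  have key : ‖φ (rot x y θ - 1)‖ ^ 2 = (2 - 2 * Real.cos θ) * ‖φ (proj x y)‖ := by
    rw [sq, ← CStarRing.norm_star_mul_self, ← map_star, ← _root_.map_mul,
      Matrix.star_eq_conjTranspose, rot_sub_one_mul x y hxy θ, _root_.map_smul]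
    rw [norm_smul ((2 - 2 * Real.cos θ : ℝ) : ℂ) (φ (proj x y)),
      Complex.norm_real, Real.norm_eq_abs, abs_of_nonneg hc0]
  have : opNorm (rot x y θ - 1) ^ 2 = (2 - 2 * Real.cos θ) * ‖φ (proj x y)‖ := key
  rw [this]
  nlinarith [norm_nonneg (φ (proj x y))]

end NormBound

section Main

lemma rho0_diag (n : ℕ) :
    rho0 n = Matrix.diagonal (fun v => if v 0 = 0 then (1 / 2 ^ n : ℂ) else 0) := by
  ext v w
  rcases eq_or_ne v w with rfl | hvw
  · rw [Matrix.diagonal_apply_eq]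
    by_cases h0 : v 0 = 0 <;> simp [rho0, h0]
  · rw [Matrix.diagonal_apply_ne _ hvw]
    simp [rho0, hvw]

lemma splitEquiv_fst {n : ℕ} (S : Finset (Fin n)) (u : Fin n → Fin 2) (a : S) :
    (splitEquiv S u).1 a = u a := rfl

lemma splitEquiv_snd {n : ℕ} (S : Finset (Fin n)) (u : Fin n → Fin 2)
    (b : (Sᶜ : Finset (Fin n))) : (splitEquiv S u).2 b = u b := rfl

lemma splitEquiv_pair {n : ℕ} (S : Finset (Fin n)) {u u₁ u₂ : Fin n → Fin 2}
    (h1 : ∀ k ∈ S, u k = u₁ k) (h2 : ∀ k, k ∉ S → u k = u₂ k) :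
    splitEquiv S u = ((splitEquiv S u₁).1, (splitEquiv S u₂).2) := by
  refine Prod.ext_iff.mpr ⟨funext fun a => ?_, funext fun b => ?_⟩
  · rw [splitEquiv_fst, splitEquiv_fst]
    exact h1 a a.2
  · rw [splitEquiv_snd, splitEquiv_snd]
    exact h2 b (Finset.mem_compl.mp b.2)

lemma udu_apply {d : Type*} [Fintype d] [DecidableEq d] (U : Matrix d d ℂ) (f : d → ℂ)
    (p q : d) : (U * Matrix.diagonal f * Uᴴ) p q = ∑ s, U p s * f s * star (U q s) := by
  rw [Matrix.mul_apply]
  refine Finset.sum_congr rfl fun s _ => ?_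
  rw [Matrix.mul_diagonal, Matrix.conjTranspose_apply]

lemma master {n : ℕ} (S : Finset (Fin (n + 1))) (i j : Fin (n + 1)) (hiS : i ∈ S)
    (hjS : j ∉ S) (h0 : i = 0 ∨ j = 0) {ε : ℝ} (hε : 0 < ε) :
    ∃ U : Matrix (Fin (n + 1) → Fin 2) (Fin (n + 1) → Fin 2) ℂ,
      U ∈ Matrix.unitaryGroup (Fin (n + 1) → Fin 2) ℂ ∧ opNorm (U - 1) < ε ∧
      ¬ (PT (Matrix.reindex (splitEquiv S) (splitEquiv S)
          (U * rho0 n * Uᴴ))).PosSemidef := by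
  classical
  have hij : i ≠ j := fun h => hjS (h ▸ hiS)
  set x : Fin (n + 1) → Fin 2 := fun _ => 0 with hxdef
  set y : Fin (n + 1) → Fin 2 := fun k => if k = i ∨ k = j then 1 else 0 with hydef
  have hyi : y i = 1 := by simp [hydef]
  have hyj : y j = 1 := by simp [hydef]
  have hxk : ∀ k, x k = 0 := fun k => rfl
  have hy0 : y 0 = 1 := by
    rcases h0 with h | h
    · rw [← h]; exact hyi
    · rw [← h]; exact hyj
  have one_ne : (1 : Fin 2) ≠ 0 := by decide
  have hxy : x ≠ y := fun h => one_ne (by rw [← hyi, ← congrFun h i])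
  set z : Fin (n + 1) → Fin 2 := fun k => if k ∈ S then y k else x k with hzdef
  set w : Fin (n + 1) → Fin 2 := fun k => if k ∈ S then x k else y k with hwdef
  have hzi : z i = 1 := by rw [hzdef]; simp [hiS, hyi]
  have hzj : z j = 0 := by rw [hzdef]; simp [hjS, hxk]
  have hwi : w i = 0 := by rw [hwdef]; simp [hiS, hxk]
  have hwj : w j = 1 := by rw [hwdef]; simp [hjS, hyj]
  have hzx : z ≠ x := fun h => one_ne (by rw [← hzi, congrFun h i])
  have hzy : z ≠ y := fun h => one_ne (by rw [← hyj, ← congrFun h j]; exact hzj)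
  have hwx : w ≠ x := fun h => one_ne (by rw [← hwj, congrFun h j])
  have hwy : w ≠ y := fun h => one_ne (by rw [← hyi, ← congrFun h i]; exact hwi)
  have hzw : z ≠ w := fun h => one_ne (by rw [← hzi, congrFun h i]; exact hwi)
  set θ := min (ε / 2) 1 with hθdef
  have hθpos : 0 < θ := lt_min (by linarith) one_pos
  have hθle : θ ≤ ε / 2 := min_le_left _ _
  have hθ1 : θ ≤ 1 := min_le_right _ _
  have hcos : 0 < Real.cos θ := Real.cos_pos_of_mem_Ioo
    ⟨by nlinarith [Real.pi_gt_three], by nlinarith [Real.pi_gt_three]⟩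
  have hsin : 0 < Real.sin θ := Real.sin_pos_of_pos_of_lt_pi hθpos
    (by nlinarith [Real.pi_gt_three])
  refine ⟨rot x y θ, ?_, ?_, ?_⟩
  · rw [Matrix.mem_unitaryGroup_iff']
    exact rot_unitary hxy θ
  · have h1 := rot_opNorm_sq_le x y hxy θ
    have h2 : 2 - 2 * Real.cos θ ≤ θ ^ 2 := by
      have e1 : Real.cos (2 * (θ / 2)) = Real.cos θ := by congr 1; ring
      have e2 := Real.cos_sq (θ / 2)
      have e3 := Real.sin_sq (θ / 2)
      have e4 := Real.sin_sq_le_sq (x := θ / 2)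
      rw [e1] at e2
      nlinarith
    have h3 : (0:ℝ) ≤ opNorm (rot x y θ - 1) := norm_nonneg _
    by_contra hcon
    push_neg at hcon
    nlinarith
  · intro hPSD
    set c := (1 / 2 ^ n : ℂ) with hcdef
    have hc : c ≠ 0 := by rw [hcdef]; norm_num
    have hcosne : ((Real.cos θ : ℝ) : ℂ) ≠ 0 := Complex.ofReal_ne_zero.mpr (ne_of_gt hcos)
    have hsinne : ((Real.sin θ : ℝ) : ℂ) ≠ 0 := Complex.ofReal_ne_zero.mpr (ne_of_gt hsin)
    have hx0 : x 0 = 0 := rfl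
    -- entry computations
    have hMxy : (rot x y θ * rho0 n * (rot x y θ)ᴴ) x y = ↑(Real.cos θ) * c * ↑(Real.sin θ) := by
      rw [rho0_diag, udu_apply]
      rw [Finset.sum_eq_single x (fun s _ hsx => ?_) (by simp)]
      · rw [rot_xx, rot_yx hxy, if_pos hx0]
        simp only [Complex.star_def, Complex.conj_ofReal]
        rfl
      · by_cases hsy : s = y
        · rw [hsy, if_neg (by rw [hy0]; exact one_ne)]
          simp
        · rw [rot_apply_eq_zero θ hsx hsy (fun h => hsx h.symm)]
          simp
    have hMyx : (rot x y θ * rho0 n * (rot x y θ)ᴴ) y x = ↑(Real.sin θ) * c * ↑(Real.cos θ) := by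
      rw [rho0_diag, udu_apply]
      rw [Finset.sum_eq_single x (fun s _ hsx => ?_) (by simp)]
      · rw [rot_xx, rot_yx hxy, if_pos hx0]
        simp only [Complex.star_def, Complex.conj_ofReal]
        rfl
      · by_cases hsy : s = y
        · rw [hsy, if_neg (by rw [hy0]; exact one_ne)]
          simp
        · rw [rot_apply_eq_zero θ hsx hsy (fun h => hsx h.symm)]
          simp
    have hMvv : ∀ v, v ≠ x → v ≠ y →
        (rot x y θ * rho0 n * (rot x y θ)ᴴ) v v = (if v 0 = 0 then c else 0) := by
      intro v hvx hvy
      rw [rho0_diag, udu_apply]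
      rw [Finset.sum_eq_single v (fun s _ hsv => ?_) (by simp)]
      · rw [rot_apply_of_notin θ hvx hvy v, if_pos rfl]
        simp [hcdef, one_div]
      · rw [rot_apply_of_notin θ hvx hvy s, if_neg (fun h => hsv h.symm)]
        ring
    -- equiv bookkeeping
    have hex : splitEquiv S x = ((splitEquiv S w).1, (splitEquiv S z).2) :=
      splitEquiv_pair S (fun k hk => by rw [hwdef]; simp [hk])
        (fun k hk => by rw [hzdef]; simp [hk])
    have hey : splitEquiv S y = ((splitEquiv S z).1, (splitEquiv S w).2) :=
      splitEquiv_pair S (fun k hk => by rw [hzdef]; simp [hk])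
        (fun k hk => by rw [hwdef]; simp [hk])
    have hM'uv : ∀ u v, (Matrix.reindex (splitEquiv S) (splitEquiv S) (rot x y θ * rho0 n * (rot x y θ)ᴴ))
        (splitEquiv S u) (splitEquiv S v) = (rot x y θ * rho0 n * (rot x y θ)ᴴ) u v := by
      intro u v
      rw [Matrix.reindex_apply, Matrix.submatrix_apply, Equiv.symm_apply_apply,
        Equiv.symm_apply_apply]
    rcases h0 with h | h
    · -- i = 0 : the hybrid z has first bit 1
      have hz0 : z 0 = 1 := h ▸ hzi
      have hdiag : PT (Matrix.reindex (splitEquiv S) (splitEquiv S) (rot x y θ * rho0 n * (rot x y θ)ᴴ))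
          (splitEquiv S z) (splitEquiv S z) = 0 := by
        simp only [PT, Matrix.of_apply, Prod.mk.eta]
        rw [hM'uv z z, hMvv z hzx hzy, if_neg (by rw [hz0]; exact one_ne)]
      have hoff := psd_entry_zero hPSD hdiag (splitEquiv S w)
      have hval : PT (Matrix.reindex (splitEquiv S) (splitEquiv S) (rot x y θ * rho0 n * (rot x y θ)ᴴ))
          (splitEquiv S z) (splitEquiv S w) = (rot x y θ * rho0 n * (rot x y θ)ᴴ) x y := by
        simp only [PT, Matrix.of_apply]
        rw [← hex, ← hey, hM'uv]
      rw [hval, hMxy] at hoff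
      exact (mul_ne_zero (mul_ne_zero hcosne hc) hsinne) hoff
    · -- j = 0 : the hybrid w has first bit 1
      have hw0 : w 0 = 1 := h ▸ hwj
      have hdiag : PT (Matrix.reindex (splitEquiv S) (splitEquiv S) (rot x y θ * rho0 n * (rot x y θ)ᴴ))
          (splitEquiv S w) (splitEquiv S w) = 0 := by
        simp only [PT, Matrix.of_apply, Prod.mk.eta]
        rw [hM'uv w w, hMvv w hwx hwy, if_neg (by rw [hw0]; exact one_ne)]
      have hoff := psd_entry_zero hPSD hdiag (splitEquiv S z)
      have hval : PT (Matrix.reindex (splitEquiv S) (splitEquiv S) (rot x y θ * rho0 n * (rot x y θ)ᴴ))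
          (splitEquiv S w) (splitEquiv S z) = (rot x y θ * rho0 n * (rot x y θ)ᴴ) y x := by
        simp only [PT, Matrix.of_apply]
        rw [← hex, ← hey, hM'uv]
      rw [hval, hMyx] at hoff
      exact (mul_ne_zero (mul_ne_zero hsinne hc) hcosne) hoff

end Main

/-- for every nonempty proper subset `S` of qubit positions, `ρ⁰ₙ` is
separable across the bipartition `S` vs `Sᶜ`, and for every `ε > 0` there is a unitary
`U` with `‖U − I‖ < ε` such that the partial transpose (on the `S` factor) of
`U ρ⁰ₙ U†` is not positive semidefinite. -/
theorem stmt2 (n : ℕ) (hn : 1 ≤ n) (S : Finset (Fin (n + 1)))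
    (hS : S.Nonempty) (hS' : S ≠ Finset.univ) :
    Separable (Matrix.reindex (splitEquiv S) (splitEquiv S) (rho0 n)) ∧
    ∀ ε > (0 : ℝ), ∃ U : Matrix (Fin (n + 1) → Fin 2) (Fin (n + 1) → Fin 2) ℂ,
      U ∈ Matrix.unitaryGroup (Fin (n + 1) → Fin 2) ℂ ∧
      opNorm (U - 1) < ε ∧
      ¬ (PT (Matrix.reindex (splitEquiv S) (splitEquiv S) (U * rho0 n * Uᴴ))).PosSemidef := by
  constructor
  · rw [rho0_diag, Matrix.reindex_apply, Matrix.submatrix_diagonal_equiv]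
    refine separable_diagonal _ fun p => ?_
    dsimp [Function.comp]
    split_ifs
    · have : ((1 / 2 ^ n : ℝ) : ℂ) = (1 / 2 ^ n : ℂ) := by push_cast; ring
      rw [← this]
      exact Complex.zero_le_real.mpr (by positivity)
    · exact le_refl _
  · intro ε hε
    by_cases h0 : (0 : Fin (n + 1)) ∈ S
    · have hc : (Sᶜ : Finset (Fin (n + 1))).Nonempty := by
        rw [Finset.nonempty_iff_ne_empty]
        simpa using hS'
      obtain ⟨b, hb⟩ := hc
      exact master S 0 b h0 (Finset.mem_compl.mp hb) (Or.inl rfl) hε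
    · obtain ⟨a, ha⟩ := hS
      exact master S a 0 ha h0 (Or.inr rfl) hε
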